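/- Exact line search for the power method: let Σ = diag(σ₁,…,σ_d) with σᵢ ≥ 0, and let u ∈ ℝᵈ be nonzero. Define R(η) = ((ηu + Σu)ᵀ Σ (ηu + Σu)) / ‖ηu + Σu‖² (the Rayleigh quotient of the updated vector). Then dR/dη ≤ 0 for all η ≥ 0; concretely, dR/dη = -2·[Σ_{i<j} uᵢ²uⱼ²(η+σᵢ)(η+σⱼ)(σᵢ-σⱼ)²] / ‖ηu + Σu‖⁴ ≤ 0 for η ≥ 0. Hence η = 0 (the pure power-method step) maximizes the Rayleigh quotient among nonnegative step sizes. -/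

import Mathlib

lemma sum_pair_split {d : ℕ} (f : Fin d × Fin d → ℝ) :
    ∑ p : Fin d × Fin d, f p =
      (∑ p ∈ Finset.univ.filter (fun p : Fin d × Fin d => p.1 < p.2), (f p + f p.swap)) +
      ∑ i, f (i, i) := by
  classical
  have hswap : ∑ p ∈ Finset.univ.filter (fun p : Fin d × Fin d => p.1 < p.2), f p.swap
      = ∑ p ∈ Finset.univ.filter (fun p : Fin d × Fin d => p.2 < p.1), f p := by
    refine Finset.sum_equiv (Equiv.prodComm (Fin d) (Fin d)) ?_ ?_
    · intro p; simp [Equiv.prodComm]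
    · intro p _; rfl
  have hdiag : ∑ p ∈ Finset.univ.filter (fun p : Fin d × Fin d => p.1 = p.2), f p
      = ∑ i, f (i, i) := by
    refine Finset.sum_bij' (fun p _ => p.1) (fun i _ => (i, i)) ?_ ?_ ?_ ?_ ?_
    · intro p hp; simp
    · intro i _; simp
    · intro p hp; simp at hp; ext <;> simp [hp]
    · intro i _; rfl
    · intro p hp; simp only [Finset.mem_filter, Finset.mem_univ, true_and] at hp
      conv_lhs => rw [show p = (p.1, p.2) from rfl, ← hp]
  rw [← Finset.sum_filter_add_sum_filter_not Finset.univ (fun p : Fin d × Fin d => p.1 < p.2) f,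
    Finset.sum_add_distrib, hswap]
  have hsplit : ∑ p ∈ Finset.univ.filter (fun p : Fin d × Fin d => ¬ p.1 < p.2), f p
      = (∑ p ∈ Finset.univ.filter (fun p : Fin d × Fin d => p.2 < p.1), f p)
        + ∑ p ∈ Finset.univ.filter (fun p : Fin d × Fin d => p.1 = p.2), f p := by
    rw [← Finset.sum_filter_add_sum_filter_not
      (Finset.univ.filter (fun p : Fin d × Fin d => ¬ p.1 < p.2))
      (fun p : Fin d × Fin d => p.2 < p.1) f]
    congr 1
    · congr 1
      ext p
      simp only [Finset.mem_filter, Finset.mem_univ, true_and, Fin.lt_def]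
      omega
    · congr 1
      ext p
      simp only [Finset.mem_filter, Finset.mem_univ, true_and, Fin.lt_def, Fin.ext_iff,
        Prod.ext_iff]
      omega
  rw [hsplit, hdiag]
  ring

/-- The Rayleigh quotient of the updated vector `ηu + Σu` for `Σ = diag(σ)`. -/
noncomputable def rayleigh {d : ℕ} (σ u : Fin d → ℝ) (η : ℝ) : ℝ :=
  (∑ i, (u i) ^ 2 * σ i * (η + σ i) ^ 2) / (∑ i, (u i) ^ 2 * (η + σ i) ^ 2)

/-- Exact line search for the power method: for `η ≥ 0` the Rayleigh quotient of
`ηu + Σu` has the stated nonpositive derivative, hence `η = 0` maximizes it among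
nonnegative step sizes. -/
theorem stmt16 (d : ℕ) (σ : Fin d → ℝ) (hσ : ∀ i, 0 ≤ σ i) (u : Fin d → ℝ)
    (hden : 0 < ∑ i, (u i) ^ 2 * (σ i) ^ 2) :
    ∀ η : ℝ, 0 ≤ η →
      HasDerivAt (rayleigh σ u)
        (-2 * (∑ p ∈ Finset.univ.filter (fun p : Fin d × Fin d => p.1 < p.2),
            (u p.1) ^ 2 * (u p.2) ^ 2 * (η + σ p.1) * (η + σ p.2) *
              (σ p.1 - σ p.2) ^ 2) /
          (∑ i, (u i) ^ 2 * (η + σ i) ^ 2) ^ 2) η ∧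
      (-2 * (∑ p ∈ Finset.univ.filter (fun p : Fin d × Fin d => p.1 < p.2),
            (u p.1) ^ 2 * (u p.2) ^ 2 * (η + σ p.1) * (η + σ p.2) *
              (σ p.1 - σ p.2) ^ 2) /
          (∑ i, (u i) ^ 2 * (η + σ i) ^ 2) ^ 2 ≤ 0) ∧
      rayleigh σ u η ≤ rayleigh σ u 0 := by
  -- there is a coordinate with `u i ≠ 0` and `σ i > 0`
  obtain ⟨i₀, hi₀⟩ : ∃ i, 0 < u i ^ 2 * σ i ^ 2 := by
    by_contra hc
    push_neg at hc
    exact absurd (Finset.sum_nonpos fun i _ => hc i) (not_le.mpr hden)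
  have hu₀ : u i₀ ≠ 0 := by intro h; rw [h] at hi₀; simp at hi₀
  have hσ₀ : 0 < σ i₀ := by
    rcases lt_or_eq_of_le (hσ i₀) with h | h
    · exact h
    · exfalso; rw [← h] at hi₀; simp at hi₀
  have hu₀sq : 0 < u i₀ ^ 2 := (sq_nonneg (u i₀)).lt_of_ne (Ne.symm (pow_ne_zero 2 hu₀))
  have hDpos : ∀ η : ℝ, 0 ≤ η → 0 < ∑ i, (u i) ^ 2 * (η + σ i) ^ 2 := by
    intro η hη
    refine Finset.sum_pos' (fun j _ => by positivity) ⟨i₀, Finset.mem_univ i₀, ?_⟩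
    have h1 : 0 < η + σ i₀ := add_pos_of_nonneg_of_pos hη hσ₀
    exact mul_pos hu₀sq (pow_pos h1 2)
  -- main claim: derivative formula and nonpositivity
  have hmain : ∀ η : ℝ, 0 ≤ η →
      HasDerivAt (rayleigh σ u)
        (-2 * (∑ p ∈ Finset.univ.filter (fun p : Fin d × Fin d => p.1 < p.2),
            (u p.1) ^ 2 * (u p.2) ^ 2 * (η + σ p.1) * (η + σ p.2) *
              (σ p.1 - σ p.2) ^ 2) /
          (∑ i, (u i) ^ 2 * (η + σ i) ^ 2) ^ 2) η ∧
      (-2 * (∑ p ∈ Finset.univ.filter (fun p : Fin d × Fin d => p.1 < p.2),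
            (u p.1) ^ 2 * (u p.2) ^ 2 * (η + σ p.1) * (η + σ p.2) *
              (σ p.1 - σ p.2) ^ 2) /
          (∑ i, (u i) ^ 2 * (η + σ i) ^ 2) ^ 2 ≤ 0) := by
    intro η hη
    have hNder : HasDerivAt (fun x : ℝ => ∑ i, (u i) ^ 2 * σ i * (x + σ i) ^ 2)
        (∑ i, (u i) ^ 2 * σ i * (2 * (η + σ i))) η := by
      apply HasDerivAt.fun_sum
      intro i _
      have h : HasDerivAt (fun x : ℝ => (x + σ i) ^ 2) (2 * (η + σ i)) η := by
        simpa using ((hasDerivAt_id η).add_const (σ i)).fun_pow 2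
      exact h.const_mul _
    have hDder : HasDerivAt (fun x : ℝ => ∑ i, (u i) ^ 2 * (x + σ i) ^ 2)
        (∑ i, (u i) ^ 2 * (2 * (η + σ i))) η := by
      apply HasDerivAt.fun_sum
      intro i _
      have h : HasDerivAt (fun x : ℝ => (x + σ i) ^ 2) (2 * (η + σ i)) η := by
        simpa using ((hasDerivAt_id η).add_const (σ i)).fun_pow 2
      exact h.const_mul _
    have hDne : (∑ i, (u i) ^ 2 * (η + σ i) ^ 2) ≠ 0 := (hDpos η hη).ne'
    have hquot : HasDerivAt (rayleigh σ u)
        (((∑ i, (u i) ^ 2 * σ i * (2 * (η + σ i))) * (∑ i, (u i) ^ 2 * (η + σ i) ^ 2)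
          - (∑ i, (u i) ^ 2 * σ i * (η + σ i) ^ 2) * (∑ i, (u i) ^ 2 * (2 * (η + σ i))))
          / (∑ i, (u i) ^ 2 * (η + σ i) ^ 2) ^ 2) η := hNder.div hDder hDne
    -- the numerator identity
    have hnum : (∑ i, (u i) ^ 2 * σ i * (2 * (η + σ i))) * (∑ i, (u i) ^ 2 * (η + σ i) ^ 2)
          - (∑ i, (u i) ^ 2 * σ i * (η + σ i) ^ 2) * (∑ i, (u i) ^ 2 * (2 * (η + σ i)))
        = -2 * (∑ p ∈ Finset.univ.filter (fun p : Fin d × Fin d => p.1 < p.2),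
            (u p.1) ^ 2 * (u p.2) ^ 2 * (η + σ p.1) * (η + σ p.2) * (σ p.1 - σ p.2) ^ 2) := by
      have h1 : (∑ i, (u i) ^ 2 * σ i * (2 * (η + σ i))) * (∑ i, (u i) ^ 2 * (η + σ i) ^ 2)
            - (∑ i, (u i) ^ 2 * σ i * (η + σ i) ^ 2) * (∑ i, (u i) ^ 2 * (2 * (η + σ i)))
          = ∑ p : Fin d × Fin d,
              ((u p.1) ^ 2 * σ p.1 * (2 * (η + σ p.1)) * ((u p.2) ^ 2 * (η + σ p.2) ^ 2)
               - (u p.1) ^ 2 * σ p.1 * (η + σ p.1) ^ 2 * ((u p.2) ^ 2 * (2 * (η + σ p.2)))) := by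
        rw [Finset.sum_mul_sum, Finset.sum_mul_sum, Fintype.sum_prod_type,
          ← Finset.sum_sub_distrib]
        exact Finset.sum_congr rfl fun i _ => (Finset.sum_sub_distrib _ _).symm
      rw [h1, sum_pair_split (fun p : Fin d × Fin d =>
        (u p.1) ^ 2 * σ p.1 * (2 * (η + σ p.1)) * ((u p.2) ^ 2 * (η + σ p.2) ^ 2)
        - (u p.1) ^ 2 * σ p.1 * (η + σ p.1) ^ 2 * ((u p.2) ^ 2 * (2 * (η + σ p.2))))]
      have hd : ∑ i : Fin d,
          ((u i) ^ 2 * σ i * (2 * (η + σ i)) * ((u i) ^ 2 * (η + σ i) ^ 2)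
            - (u i) ^ 2 * σ i * (η + σ i) ^ 2 * ((u i) ^ 2 * (2 * (η + σ i)))) = 0 :=
        Finset.sum_eq_zero fun i _ => by ring
      rw [hd, add_zero, Finset.mul_sum]
      refine Finset.sum_congr rfl fun p _ => ?_
      simp only [Prod.fst_swap, Prod.snd_swap]
      ring
    rw [hnum] at hquot
    refine ⟨hquot, ?_⟩
    have hS : 0 ≤ ∑ p ∈ Finset.univ.filter (fun p : Fin d × Fin d => p.1 < p.2),
        (u p.1) ^ 2 * (u p.2) ^ 2 * (η + σ p.1) * (η + σ p.2) * (σ p.1 - σ p.2) ^ 2 := by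
      refine Finset.sum_nonneg fun p _ => ?_
      have h1 : 0 ≤ η + σ p.1 := add_nonneg hη (hσ p.1)
      have h2 : 0 ≤ η + σ p.2 := add_nonneg hη (hσ p.2)
      exact mul_nonneg (mul_nonneg (mul_nonneg (mul_nonneg (sq_nonneg _) (sq_nonneg _)) h1) h2)
        (sq_nonneg _)
    exact div_nonpos_iff.mpr (Or.inr ⟨by linarith, sq_nonneg _⟩)
  intro η hη
  refine ⟨(hmain η hη).1, (hmain η hη).2, ?_⟩
  have hanti : AntitoneOn (rayleigh σ u) (Set.Ici (0 : ℝ)) := by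
    refine antitoneOn_of_deriv_nonpos (convex_Ici 0) ?_ ?_ ?_
    · intro x hx
      exact ((hmain x hx).1).continuousAt.continuousWithinAt
    · intro x hx
      rw [interior_Ici] at hx
      exact ((hmain x hx.le).1).differentiableAt.differentiableWithinAt
    · intro x hx
      rw [interior_Ici] at hx
      rw [((hmain x hx.le).1).deriv]
      exact (hmain x hx.le).2
  exact hanti (Set.self_mem_Ici) hη hη
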